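/- Commutator lemma (generalization of Rajchman's theorem, coefficient form). Let c : ℤ → ℂ with c(k) → 0 as |k| → ∞, and let g : ℤ → ℂ satisfy Σ_{p∈ℤ} |p|·|g(p)| < ∞. Then lim_{N→∞} [ Σ_{l : |l| ≤ N} | Σ_{k : |k| > N} c(k) g(l−k) | + Σ_{l : |l| > N} | Σ_{k : |k| ≤ N} c(k) g(l−k) | ] = 0. -/

import Mathlib

noncomputable section
open Filter Topology

namespace CommutatorLemma

lemma card_filter_le (N : ℕ) (q : ℤ) :
    (((Finset.Icc (-(N:ℤ)) (N:ℤ))).filter (fun l => (N:ℤ) < |l + q|)).card ≤ (2 * |q|).toNat := by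
  have hsub : ((Finset.Icc (-(N:ℤ)) (N:ℤ)).filter (fun l => (N:ℤ) < |l + q|)) ⊆
      (Finset.Icc (-(N:ℤ)) (N:ℤ)) \ (Finset.Icc (-((N:ℤ) - |q|)) ((N:ℤ) - |q|)) := by
    intro l hl
    simp only [Finset.mem_filter, Finset.mem_Icc] at hl
    simp only [Finset.mem_sdiff, Finset.mem_Icc]
    refine ⟨⟨hl.1.1, hl.1.2⟩, ?_⟩
    intro hmem
    have h1 : |l| ≤ (N:ℤ) - |q| := abs_le.mpr ⟨by linarith [hmem.1], hmem.2⟩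
    have h2 : |l + q| ≤ |l| + |q| := abs_add_le _ _
    have := hl.2
    linarith
  have h2 : (Finset.Icc (-((N:ℤ) - |q|)) ((N:ℤ) - |q|)) ⊆ (Finset.Icc (-(N:ℤ)) (N:ℤ)) :=
    Finset.Icc_subset_Icc (by have := abs_nonneg q; omega) (by have := abs_nonneg q; omega)
  calc _ ≤ ((Finset.Icc (-(N:ℤ)) (N:ℤ)) \ (Finset.Icc (-((N:ℤ) - |q|)) ((N:ℤ) - |q|))).card :=
        Finset.card_le_card hsub
    _ ≤ _ := by
        rw [Finset.card_sdiff_of_subset h2, Int.card_Icc, Int.card_Icc]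
        have := abs_nonneg q
        omega

def V1 (c : ℤ → ℂ) (N : ℕ) (p : ℤ) : ℝ :=
  ∑ l ∈ Finset.Icc (-(N:ℤ)) (N:ℤ), if (N:ℤ) < |l - p| then ‖c (l - p)‖ else 0

def V2 (c : ℤ → ℂ) (N : ℕ) (p : ℤ) : ℝ :=
  ∑ k ∈ Finset.Icc (-(N:ℤ)) (N:ℤ), if (N:ℤ) < |k + p| then ‖c k‖ else 0

lemma V1_nonneg (c : ℤ → ℂ) (N : ℕ) (p : ℤ) : 0 ≤ V1 c N p :=
  Finset.sum_nonneg fun l _ => by positivity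

lemma V2_nonneg (c : ℤ → ℂ) (N : ℕ) (p : ℤ) : 0 ≤ V2 c N p :=
  Finset.sum_nonneg fun l _ => by positivity

lemma V1_le (c : ℤ → ℂ) (N : ℕ) (p : ℤ) {M' : ℝ} (hM0 : 0 ≤ M')
    (hM' : ∀ k : ℤ, (N:ℤ) - |p| < |k| → ‖c k‖ ≤ M') :
    V1 c N p ≤ 2 * |p| * M' := by
  rw [V1, ← Finset.sum_filter]
  calc ∑ l ∈ (Finset.Icc (-(N:ℤ)) (N:ℤ)).filter (fun l => (N:ℤ) < |l - p|), ‖c (l - p)‖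
      ≤ ∑ _l ∈ (Finset.Icc (-(N:ℤ)) (N:ℤ)).filter (fun l => (N:ℤ) < |l - p|), M' := by
        apply Finset.sum_le_sum
        intro l hl
        simp only [Finset.mem_filter] at hl
        exact hM' _ (by have := abs_nonneg p; linarith [hl.2])
    _ = ((Finset.Icc (-(N:ℤ)) (N:ℤ)).filter (fun l => (N:ℤ) < |l - p|)).card * M' := by
        rw [Finset.sum_const, nsmul_eq_mul]
    _ ≤ 2 * |p| * M' := by
        apply mul_le_mul_of_nonneg_right _ hM0
        have h := card_filter_le N (-p)
        simp only [← sub_eq_add_neg] at h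
        calc (((Finset.Icc (-(N:ℤ)) (N:ℤ)).filter (fun l => (N:ℤ) < |l - p|)).card : ℝ)
            ≤ ((2 * |(-p:ℤ)|).toNat : ℝ) := by exact_mod_cast h
          _ ≤ 2 * |p| := by
              rw [abs_neg]
              exact_mod_cast (Int.toNat_of_nonneg (by positivity : (0:ℤ) ≤ 2*|p|)).le

lemma V2_le (c : ℤ → ℂ) (N : ℕ) (p : ℤ) {M' : ℝ} (hM0 : 0 ≤ M')
    (hM' : ∀ k : ℤ, (N:ℤ) - |p| < |k| → ‖c k‖ ≤ M') :
    V2 c N p ≤ 2 * |p| * M' := by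
  rw [V2, ← Finset.sum_filter]
  calc ∑ k ∈ (Finset.Icc (-(N:ℤ)) (N:ℤ)).filter (fun k => (N:ℤ) < |k + p|), ‖c k‖
      ≤ ∑ _k ∈ (Finset.Icc (-(N:ℤ)) (N:ℤ)).filter (fun k => (N:ℤ) < |k + p|), M' := by
        apply Finset.sum_le_sum
        intro k hk
        simp only [Finset.mem_filter] at hk
        apply hM'
        have h1 : |k + p| ≤ |k| + |p| := abs_add_le _ _
        linarith [hk.2]
    _ = ((Finset.Icc (-(N:ℤ)) (N:ℤ)).filter (fun k => (N:ℤ) < |k + p|)).card * M' := by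
        rw [Finset.sum_const, nsmul_eq_mul]
    _ ≤ 2 * |p| * M' := by
        apply mul_le_mul_of_nonneg_right _ hM0
        have h := card_filter_le N p
        calc (((Finset.Icc (-(N:ℤ)) (N:ℤ)).filter (fun k => (N:ℤ) < |k + p|)).card : ℝ)
            ≤ ((2 * |p|).toNat : ℝ) := by exact_mod_cast h
          _ ≤ 2 * |p| := by
              exact_mod_cast (Int.toNat_of_nonneg (by positivity : (0:ℤ) ≤ 2*|p|)).le


/-- From cofinite convergence, a tail smallness bound. -/
lemma exists_tail_bound (c : ℤ → ℂ) (hc : Tendsto c cofinite (nhds 0))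
    {ε : ℝ} (hε : 0 < ε) : ∃ B : ℕ, ∀ k : ℤ, (B:ℤ) < |k| → ‖c k‖ ≤ ε := by
  have h1 : ∀ᶠ k in cofinite, dist (c k) 0 < ε := (Metric.tendsto_nhds.mp hc) ε hε
  have h2 : {k : ℤ | ¬ dist (c k) 0 < ε}.Finite := Filter.eventually_cofinite.mp h1
  refine ⟨∑ k ∈ h2.toFinset, k.natAbs, fun k hk => ?_⟩
  by_contra hcon
  have hk2 : k ∈ h2.toFinset := by
    simp only [Set.Finite.mem_toFinset, Set.mem_setOf_eq]
    rw [dist_zero_right]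
    intro h; exact hcon h.le
  have : k.natAbs ≤ ∑ k ∈ h2.toFinset, k.natAbs :=
    Finset.single_le_sum (fun _ _ => Nat.zero_le _) hk2
  have : (k.natAbs : ℤ) ≤ ((∑ k ∈ h2.toFinset, k.natAbs : ℕ) : ℤ) := by exact_mod_cast this
  rw [Int.abs_eq_natAbs] at hk
  omega

/-- A global bound for `c`. -/
lemma exists_global_bound (c : ℤ → ℂ) (hc : Tendsto c cofinite (nhds 0)) :
    ∃ M : ℝ, 0 ≤ M ∧ ∀ k : ℤ, ‖c k‖ ≤ M := by
  obtain ⟨B, hB⟩ := exists_tail_bound c hc one_pos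
  refine ⟨1 + ∑ k ∈ Finset.Icc (-(B:ℤ)) (B:ℤ), ‖c k‖, by positivity, fun k => ?_⟩
  by_cases hk : (B:ℤ) < |k|
  · have := hB k hk
    have h2 : (0:ℝ) ≤ ∑ k ∈ Finset.Icc (-(B:ℤ)) (B:ℤ), ‖c k‖ :=
      Finset.sum_nonneg fun _ _ => norm_nonneg _
    linarith
  · push_neg at hk
    have hmem : k ∈ Finset.Icc (-(B:ℤ)) (B:ℤ) := by
      simp only [Finset.mem_Icc]
      constructor <;> [linarith [neg_abs_le k]; linarith [le_abs_self k]]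
    have := Finset.single_le_sum (fun (i:ℤ) _ => norm_nonneg (c i)) hmem
    linarith

lemma V_tendsto (c : ℤ → ℂ) (hc : Tendsto c cofinite (nhds 0)) (p : ℤ) :
    Tendsto (fun N => V1 c N p + V2 c N p) atTop (nhds 0) := by
  rw [Metric.tendsto_atTop]
  intro ε hε
  set r : ℝ := 4 * |(p:ℝ)| + 1 with hr
  have hr0 : (0:ℝ) < r := by positivity
  have hε' : 0 < ε / r := div_pos hε hr0
  obtain ⟨B, hB⟩ := exists_tail_bound c hc hε'
  refine ⟨B + p.natAbs, fun N hN => ?_⟩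
  have hNp : (B:ℤ) ≤ (N:ℤ) - |p| := by
    rw [Int.abs_eq_natAbs]
    omega
  have hM' : ∀ k : ℤ, (N:ℤ) - |p| < |k| → ‖c k‖ ≤ ε / r := fun k hk =>
    hB k (lt_of_le_of_lt hNp hk)
  have h1 := V1_le c N p hε'.le hM'
  have h2 := V2_le c N p hε'.le hM'
  have hpos := add_nonneg (V1_nonneg c N p) (V2_nonneg c N p)
  rw [Real.dist_eq, sub_zero, abs_of_nonneg hpos]
  have hcast : ((|p| : ℤ) : ℝ) = |(p:ℝ)| := by push_cast; ring
  calc V1 c N p + V2 c N p ≤ 2 * |p| * (ε / r) + 2 * |p| * (ε / r) := add_le_add h1 h2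
    _ = 4 * |(p:ℝ)| * (ε / r) := by rw [← hcast]; ring
    _ < ε := by
        have h4 : 4 * |(p:ℝ)| < r := by rw [hr]; linarith
        calc 4 * |(p:ℝ)| * (ε / r) < r * (ε / r) := by
              apply mul_lt_mul_of_pos_right h4 hε'
          _ = ε := by field_simp


theorem commutator_lemma
    (c : ℤ → ℂ) (hc : Tendsto c cofinite (nhds 0))
    (g : ℤ → ℂ) (hg : Summable (fun p : ℤ => (|p| : ℝ) * ‖g p‖)) :
    Tendsto (fun N : ℕ =>
        (∑ l ∈ Finset.Icc (-(N : ℤ)) (N : ℤ),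
            ‖∑' k : {k : ℤ // (N : ℤ) < |k|}, c k.val * g (l - k.val)‖) +
        (∑' l : {l : ℤ // (N : ℤ) < |l|},
            ‖∑ k ∈ Finset.Icc (-(N : ℤ)) (N : ℤ), c k * g (l.val - k)‖))
      atTop (nhds 0) := by
  obtain ⟨M, hM0, hM⟩ := exists_global_bound c hc
  -- summability of ‖g‖
  have hg' : Summable (fun p : ℤ => ‖g p‖) := by
    apply Summable.of_norm_bounded_eventually hg
    rw [Filter.eventually_cofinite]
    apply Set.Finite.subset (Set.finite_singleton 0)
    intro p hp
    simp only [Set.mem_setOf_eq, norm_norm, not_le] at hp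
    simp only [Set.mem_singleton_iff]
    by_contra h0
    have h1 : (1:ℝ) ≤ |(p:ℝ)| := by
      have : 1 ≤ |p| := Int.one_le_abs (by exact_mod_cast h0)
      exact_mod_cast this
    nlinarith [norm_nonneg (g p), hp]
  -- auxiliary summability facts
  have hgsub : ∀ a : ℤ, Summable (fun l : ℤ => ‖g (l - a)‖) := fun a =>
    ((Equiv.subRight a).summable_iff (f := fun p : ℤ => ‖g p‖)).mpr hg'
  have hgsubL : ∀ l : ℤ, Summable (fun k : ℤ => ‖g (l - k)‖) := fun l =>
    ((Equiv.subLeft l).summable_iff (f := fun p : ℤ => ‖g p‖)).mpr hg'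
  have hHl : ∀ l : ℤ, Summable (fun k : ℤ => ‖c k * g (l - k)‖) := fun l => by
    apply Summable.of_nonneg_of_le (fun k => norm_nonneg _)
      (fun k => ?_) ((hgsubL l).mul_left M)
    rw [norm_mul]
    exact mul_le_mul_of_nonneg_right (hM k) (norm_nonneg _)
  -- the dominating sequence
  set W : ℕ → ℤ → ℝ := fun N p => (V1 c N p + V2 c N p) * ‖g p‖ with hW
  have habs : ∀ p : ℤ, ((|p| : ℤ) : ℝ) = |(p:ℝ)| := fun p => by push_cast; ring
  have hVle : ∀ N : ℕ, ∀ p : ℤ, V1 c N p + V2 c N p ≤ 4 * |(p:ℝ)| * M := by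
    intro N p
    have h1 := V1_le c N p hM0 (fun k _ => hM k)
    have h2 := V2_le c N p hM0 (fun k _ => hM k)
    rw [← habs p]
    push_cast at h1 h2 ⊢
    linarith
  have hWnonneg : ∀ N p, 0 ≤ W N p := fun N p =>
    mul_nonneg (add_nonneg (V1_nonneg c N p) (V2_nonneg c N p)) (norm_nonneg _)
  have hWle : ∀ N p, W N p ≤ 4 * M * ((|p| : ℝ) * ‖g p‖) := by
    intro N p
    rw [hW]
    have := mul_le_mul_of_nonneg_right (hVle N p) (norm_nonneg (g p))
    calc (V1 c N p + V2 c N p) * ‖g p‖ ≤ 4 * |(p:ℝ)| * M * ‖g p‖ := this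
      _ = 4 * M * ((|p| : ℝ) * ‖g p‖) := by ring
  have hWsummable : ∀ N, Summable (W N) := fun N =>
    Summable.of_nonneg_of_le (hWnonneg N) (hWle N) (hg.mul_left (4 * M))
  -- the main bound : Q N ≤ ∑' p, W N p
  have hQle : ∀ N : ℕ,
      (∑ l ∈ Finset.Icc (-(N : ℤ)) (N : ℤ),
          ‖∑' k : {k : ℤ // (N : ℤ) < |k|}, c k.val * g (l - k.val)‖) +
      (∑' l : {l : ℤ // (N : ℤ) < |l|},
          ‖∑ k ∈ Finset.Icc (-(N : ℤ)) (N : ℤ), c k * g (l.val - k)‖) ≤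
      ∑' p : ℤ, W N p := by
    intro N
    -- summability of the per-`p` pieces
    have hS1 : Summable (fun p : ℤ => V1 c N p * ‖g p‖) := by
      apply Summable.of_nonneg_of_le
        (fun p => mul_nonneg (V1_nonneg c N p) (norm_nonneg _)) (fun p => ?_)
        (hg.mul_left (2 * M))
      have h1 := mul_le_mul_of_nonneg_right
        (V1_le c N p hM0 (fun k _ => hM k)) (norm_nonneg (g p))
      rw [← habs p]
      push_cast at h1 ⊢
      nlinarith [norm_nonneg (g p)]
    have hS2 : Summable (fun p : ℤ => V2 c N p * ‖g p‖) := by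
      apply Summable.of_nonneg_of_le
        (fun p => mul_nonneg (V2_nonneg c N p) (norm_nonneg _)) (fun p => ?_)
        (hg.mul_left (2 * M))
      have h1 := mul_le_mul_of_nonneg_right
        (V2_le c N p hM0 (fun k _ => hM k)) (norm_nonneg (g p))
      rw [← habs p]
      push_cast at h1 ⊢
      nlinarith [norm_nonneg (g p)]
    -- Term 1
    have step1 : ∀ l : ℤ, ‖∑' k : {k : ℤ // (N : ℤ) < |k|}, c k.val * g (l - k.val)‖
        ≤ ∑' p : ℤ, (if (N:ℤ) < |l - p| then ‖c (l - p)‖ * ‖g p‖ else 0) := by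
      intro l
      have hsub : Summable (fun k : {k : ℤ // (N:ℤ) < |k|} => ‖c k.val * g (l - k.val)‖) :=
        (hHl l).subtype _
      calc ‖∑' k : {k : ℤ // (N : ℤ) < |k|}, c k.val * g (l - k.val)‖
          ≤ ∑' k : {k : ℤ // (N:ℤ) < |k|}, ‖c k.val * g (l - k.val)‖ :=
            norm_tsum_le_tsum_norm hsub
        _ = ∑' k : ℤ, Set.indicator {k : ℤ | (N:ℤ) < |k|}
              (fun k => ‖c k * g (l - k)‖) k :=
            tsum_subtype {k : ℤ | (N:ℤ) < |k|} (fun k => ‖c k * g (l - k)‖)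
        _ = ∑' k : ℤ, (if (N:ℤ) < |k| then ‖c k * g (l - k)‖ else 0) := by
            congr 1; funext k; simp [Set.indicator_apply]
        _ = ∑' p : ℤ, (if (N:ℤ) < |l - p| then ‖c (l - p)‖ * ‖g p‖ else 0) := by
            rw [← (Equiv.subLeft l).tsum_eq
              (fun k : ℤ => if (N:ℤ) < |k| then ‖c k * g (l - k)‖ else 0)]
            congr 1; funext p
            simp only [Equiv.subLeft_apply, sub_sub_cancel, norm_mul]
    have hsummable1 : ∀ l : ℤ,
        Summable (fun p : ℤ => if (N:ℤ) < |l - p| then ‖c (l - p)‖ * ‖g p‖ else 0) := by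
      intro l
      apply Summable.of_nonneg_of_le (fun p => ?_) (fun p => ?_) (hg'.mul_left M)
      · split <;> positivity
      · split
        · exact mul_le_mul_of_nonneg_right (hM _) (norm_nonneg _)
        · positivity
    have hT1 : (∑ l ∈ Finset.Icc (-(N : ℤ)) (N : ℤ),
          ‖∑' k : {k : ℤ // (N : ℤ) < |k|}, c k.val * g (l - k.val)‖)
        ≤ ∑' p : ℤ, V1 c N p * ‖g p‖ := by
      calc (∑ l ∈ Finset.Icc (-(N : ℤ)) (N : ℤ),
            ‖∑' k : {k : ℤ // (N : ℤ) < |k|}, c k.val * g (l - k.val)‖)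
          ≤ ∑ l ∈ Finset.Icc (-(N : ℤ)) (N : ℤ),
            ∑' p : ℤ, (if (N:ℤ) < |l - p| then ‖c (l - p)‖ * ‖g p‖ else 0) :=
            Finset.sum_le_sum fun l _ => step1 l
        _ = ∑' p : ℤ, ∑ l ∈ Finset.Icc (-(N : ℤ)) (N : ℤ),
            (if (N:ℤ) < |l - p| then ‖c (l - p)‖ * ‖g p‖ else 0) :=
            (Summable.tsum_finsetSum fun l _ => hsummable1 l).symm
        _ = ∑' p : ℤ, V1 c N p * ‖g p‖ := by
            congr 1; funext p
            rw [V1, Finset.sum_mul]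
            apply Finset.sum_congr rfl
            intro l _
            rw [ite_mul, zero_mul]
    -- Term 2
    have hbig : Summable (fun l : ℤ => ∑ k ∈ Finset.Icc (-(N : ℤ)) (N : ℤ), ‖c k * g (l - k)‖) := by
      apply summable_sum
      intro k _
      simpa [norm_mul] using (hgsub k).mul_left ‖c k‖
    have hsmall : Summable (fun l : {l : ℤ // (N:ℤ) < |l|} =>
        ‖∑ k ∈ Finset.Icc (-(N : ℤ)) (N : ℤ), c k * g (l.val - k)‖) := by
      apply Summable.of_nonneg_of_le (fun l => norm_nonneg _)
        (fun l => norm_sum_le _ _) (hbig.subtype _)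
    have hsum2 : ∀ k : ℤ, Summable (fun l : ℤ =>
        if (N:ℤ) < |l| then ‖c k * g (l - k)‖ else 0) := by
      intro k
      apply Summable.of_nonneg_of_le (fun l => ?_) (fun l => ?_) ((hgsub k).mul_left ‖c k‖)
      · split <;> positivity
      · split
        · rw [norm_mul]
        · positivity
    have hsum3 : ∀ k : ℤ, Summable (fun p : ℤ =>
        if (N:ℤ) < |k + p| then ‖c k‖ * ‖g p‖ else 0) := by
      intro k
      apply Summable.of_nonneg_of_le (fun p => ?_) (fun p => ?_) (hg'.mul_left ‖c k‖)
      · split <;> positivity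
      · split
        · exact le_refl _
        · positivity
    have hT2 : (∑' l : {l : ℤ // (N : ℤ) < |l|},
          ‖∑ k ∈ Finset.Icc (-(N : ℤ)) (N : ℤ), c k * g (l.val - k)‖)
        ≤ ∑' p : ℤ, V2 c N p * ‖g p‖ := by
      calc (∑' l : {l : ℤ // (N : ℤ) < |l|},
            ‖∑ k ∈ Finset.Icc (-(N : ℤ)) (N : ℤ), c k * g (l.val - k)‖)
          ≤ ∑' l : {l : ℤ // (N:ℤ) < |l|},
            ∑ k ∈ Finset.Icc (-(N : ℤ)) (N : ℤ), ‖c k * g (l.val - k)‖ :=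
            Summable.tsum_le_tsum (fun l => norm_sum_le _ _) hsmall (hbig.subtype _)
        _ = ∑' l : ℤ, Set.indicator {l : ℤ | (N:ℤ) < |l|}
              (fun l => ∑ k ∈ Finset.Icc (-(N : ℤ)) (N : ℤ), ‖c k * g (l - k)‖) l :=
            tsum_subtype {l : ℤ | (N:ℤ) < |l|}
              (fun l => ∑ k ∈ Finset.Icc (-(N : ℤ)) (N : ℤ), ‖c k * g (l - k)‖)
        _ = ∑' l : ℤ, ∑ k ∈ Finset.Icc (-(N : ℤ)) (N : ℤ),
              (if (N:ℤ) < |l| then ‖c k * g (l - k)‖ else 0) := by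
            congr 1; funext l
            rw [Set.indicator_apply]
            split
            · rename_i hmem
              simp only [Set.mem_setOf_eq] at hmem
              simp [hmem]
            · rename_i hmem
              simp only [Set.mem_setOf_eq] at hmem
              simp [hmem]
        _ = ∑ k ∈ Finset.Icc (-(N : ℤ)) (N : ℤ), ∑' l : ℤ,
              (if (N:ℤ) < |l| then ‖c k * g (l - k)‖ else 0) :=
            Summable.tsum_finsetSum fun k _ => hsum2 k
        _ = ∑ k ∈ Finset.Icc (-(N : ℤ)) (N : ℤ), ∑' p : ℤ,
              (if (N:ℤ) < |k + p| then ‖c k‖ * ‖g p‖ else 0) := by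
            apply Finset.sum_congr rfl
            intro k _
            rw [← (Equiv.addLeft k).tsum_eq
              (fun l : ℤ => if (N:ℤ) < |l| then ‖c k * g (l - k)‖ else 0)]
            congr 1; funext p
            simp only [Equiv.coe_addLeft, add_sub_cancel_left, norm_mul]
        _ = ∑' p : ℤ, ∑ k ∈ Finset.Icc (-(N : ℤ)) (N : ℤ),
              (if (N:ℤ) < |k + p| then ‖c k‖ * ‖g p‖ else 0) :=
            (Summable.tsum_finsetSum fun k _ => hsum3 k).symm
        _ = ∑' p : ℤ, V2 c N p * ‖g p‖ := by
            congr 1; funext p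
            rw [V2, Finset.sum_mul]
            apply Finset.sum_congr rfl
            intro k _
            rw [ite_mul, zero_mul]
    calc _ ≤ (∑' p : ℤ, V1 c N p * ‖g p‖) + ∑' p : ℤ, V2 c N p * ‖g p‖ := add_le_add hT1 hT2
      _ = ∑' p : ℤ, W N p := by
          rw [← Summable.tsum_add hS1 hS2]
          congr 1; funext p
          rw [hW]
          ring
  -- dominated convergence
  have hWtendsto : Tendsto (fun N => ∑' p : ℤ, W N p) atTop (nhds 0) := by
    have h0 : (0:ℝ) = ∑' _p : ℤ, (0:ℝ) := by rw [tsum_zero]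
    rw [h0]
    apply tendsto_tsum_of_dominated_convergence (g := fun _ : ℤ => (0:ℝ))
      (bound := fun p : ℤ => 4 * M * ((|p| : ℝ) * ‖g p‖)) (hg.mul_left (4 * M))
    · intro p
      have hv := V_tendsto c hc p
      have := hv.mul_const ‖g p‖
      rw [zero_mul] at this
      exact this
    · filter_upwards with N
      intro p
      rw [Real.norm_eq_abs, abs_of_nonneg (hWnonneg N p)]
      exact hWle N p
  -- squeeze
  apply squeeze_zero (fun N => ?_) hQle hWtendsto
  apply add_nonneg
  · exact Finset.sum_nonneg fun l _ => norm_nonneg _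
  · exact tsum_nonneg fun l => norm_nonneg _

end CommutatorLemma
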